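/- Rayleigh quotient upper bound for the ground state energy: let V ∈ C(𝕋) with V ≥ 0, V(0) = 0, and V(x) ≤ Kx² for |x| ≤ ρ. Then the principal eigenvalue E(ε) of −2ε² d²/dx² + V on 𝕋 satisfies E(ε) ≤ Cε for all sufficiently small ε > 0, where C depends only on K and ρ. In particular, E(ε) is characterized by E(ε) = inf { ∫(2ε²|v'|² + Vv²)dx / ∫v² dx : v ∈ H¹(𝕋), v ≠ 0 }. -/

import Mathlib

open Real MeasureTheory

lemma gmax_hasDerivAt (t : ℝ) :
    HasDerivAt (fun s : ℝ => (max s 0) ^ 2) (2 * max t 0) t := by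
  rcases lt_trichotomy t 0 with ht | ht | ht
  · have h0 : HasDerivAt (fun _ : ℝ => (0:ℝ)) 0 t := hasDerivAt_const t 0
    have heq : (fun s : ℝ => (max s 0) ^ 2) =ᶠ[nhds t] fun _ => (0:ℝ) := by
      filter_upwards [gt_mem_nhds ht] with s hs
      rw [max_eq_right hs.le]; norm_num
    have := h0.congr_of_eventuallyEq heq
    simpa [max_eq_right ht.le] using this
  · subst ht
    rw [hasDerivAt_iff_tendsto_slope]
    have heq : Set.EqOn (slope (fun s : ℝ => (max s 0) ^ 2) 0) (fun s => max s 0) {(0:ℝ)}ᶜ := by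
      intro s hs
      simp only [slope_def_field, Set.mem_compl_iff, Set.mem_singleton_iff] at *
      rcases le_or_gt s 0 with h | h
      · rw [max_eq_right h]; simp
      · rw [max_eq_left h.le]; field_simp; simp; ring
    have hcont : Filter.Tendsto (fun s : ℝ => max s 0) (nhdsWithin 0 {(0:ℝ)}ᶜ) (nhds (0:ℝ)) := by
      have : Continuous (fun s : ℝ => max s 0) := continuous_id.max continuous_const
      simpa using (this.tendsto 0).mono_left nhdsWithin_le_nhds
    refine (Filter.tendsto_congr' ?_).mpr (by simpa using hcont)
    exact Filter.eventuallyEq_of_mem self_mem_nhdsWithin heq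
  · have h0 : HasDerivAt (fun s : ℝ => s ^ 2) (2 * t) t := by
      simpa using hasDerivAt_pow 2 t
    have heq : (fun s : ℝ => (max s 0) ^ 2) =ᶠ[nhds t] fun s => s ^ 2 := by
      filter_upwards [lt_mem_nhds ht] with s hs
      rw [max_eq_left hs.le]
    have := h0.congr_of_eventuallyEq heq
    simpa [max_eq_left ht.le] using this

lemma gmax_contDiff : ContDiff ℝ 1 (fun s : ℝ => (max s 0) ^ 2) := by
  rw [contDiff_one_iff_deriv]
  constructor
  · exact fun t => (gmax_hasDerivAt t).differentiableAt
  · have : deriv (fun s : ℝ => (max s 0) ^ 2) = fun t => 2 * max t 0 := by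
      funext t; exact (gmax_hasDerivAt t).deriv
    rw [this]
    exact continuous_const.mul (continuous_id.max continuous_const)

lemma integral_le_const_mul {f : ℝ → ℝ} {a b M : ℝ} (hab : a ≤ b) (hf : Continuous f)
    (h : ∀ x ∈ Set.Icc a b, f x ≤ M) : ∫ x in a..b, f x ≤ (b - a) * M := by
  have := intervalIntegral.integral_mono_on hab (hf.intervalIntegrable a b)
    (intervalIntegrable_const (μ := volume)) h
  simpa [smul_eq_mul] using this

lemma const_mul_le_integral {f : ℝ → ℝ} {a b M : ℝ} (hab : a ≤ b) (hf : Continuous f)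
    (h : ∀ x ∈ Set.Icc a b, M ≤ f x) : (b - a) * M ≤ ∫ x in a..b, f x := by
  have := intervalIntegral.integral_mono_on hab (intervalIntegrable_const (μ := volume))
    (hf.intervalIntegrable a b) h
  simpa [smul_eq_mul] using this

lemma integral_zero_of_eq_zero {f : ℝ → ℝ} {a b : ℝ} (hab : a ≤ b)
    (h : ∀ x ∈ Set.Icc a b, f x = 0) : ∫ x in a..b, f x = 0 := by
  rw [intervalIntegral.integral_congr (g := fun _ => (0:ℝ))
    (by rwa [Set.uIcc_of_le hab])]
  simp

-- trig facts
lemma one_sub_cos_le (t : ℝ) : 1 - Real.cos (2 * t) ≤ 2 * t ^ 2 := by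
  have h1 : Real.cos (2 * t) = 1 - 2 * Real.sin t ^ 2 := by
    rw [Real.cos_two_mul]; nlinarith [Real.sin_sq_add_cos_sq t]
  nlinarith [Real.sin_sq_le_sq (x := t)]

lemma one_sub_cos_ge {t : ℝ} (h0 : 0 ≤ t) (h1 : t ≤ π / 2) :
    2 * (2 / π * t) ^ 2 ≤ 1 - Real.cos (2 * t) := by
  have h2 : Real.cos (2 * t) = 1 - 2 * Real.sin t ^ 2 := by
    rw [Real.cos_two_mul]; nlinarith [Real.sin_sq_add_cos_sq t]
  have h3 := Real.mul_le_sin h0 h1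
  have h4 : (2 / π * t) ^ 2 ≤ Real.sin t ^ 2 :=
    pow_le_pow_left₀ (by positivity) h3 2
  nlinarith [h4]
set_option maxHeartbeats 1600000 in
theorem stmt16 (K ρ : ℝ) (hK : 0 < K) (hρ : 0 < ρ) :
    ∃ C > 0, ∃ ε₀ > 0, ∀ V : ℝ → ℝ,
      Continuous V → (∀ x, V (x + 1) = V x) → (∀ x, 0 ≤ V x) → V 0 = 0 →
      (∀ x : ℝ, |x| ≤ ρ → V x ≤ K * x ^ 2) →
      ∀ ε : ℝ, 0 < ε → ε < ε₀ →
        sInf { e : ℝ | ∃ v : ℝ → ℝ,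
            ContDiff ℝ 1 v ∧ (∀ x, v (x + 1) = v x) ∧
            (∫ x in (0:ℝ)..1, (v x) ^ 2) ≠ 0 ∧
            e = (∫ x in (0:ℝ)..1, (2 * ε ^ 2 * (deriv v x) ^ 2 + V x * (v x) ^ 2)) /
                  (∫ x in (0:ℝ)..1, (v x) ^ 2) }
          ≤ C * ε := by
  refine ⟨π ^ 8 * (26 + K), mul_pos (pow_pos Real.pi_pos 8) (by linarith), min (ρ ^ 2) (1 / 4), by positivity, ?_⟩
  intro V hVc hVper hVpos hV0 hVK ε hε hεlt
  -- basic facts about δ = √ε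
  set δ := Real.sqrt ε with hδdef
  have hδpos : 0 < δ := Real.sqrt_pos.mpr hε
  have hεδ : ε = δ ^ 2 := (Real.sq_sqrt hε.le).symm
  have hδρ : δ ≤ ρ := by
    have h1 : ε < ρ ^ 2 := lt_of_lt_of_le hεlt (min_le_left _ _)
    have := Real.sqrt_lt_sqrt hε.le h1
    rw [Real.sqrt_sq hρ.le] at this
    exact this.le
  have hδhalf : δ ≤ 1 / 2 := by
    have h1 : ε < (1 / 2 : ℝ) ^ 2 := by
      have := lt_of_lt_of_le hεlt (min_le_right _ _); nlinarith
    have := Real.sqrt_lt_sqrt hε.le h1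
    rw [Real.sqrt_sq (by norm_num : (0:ℝ) ≤ 1/2)] at this
    exact this.le
  -- the trial function
  set c := Real.cos (2 * π * δ) with hc
  set f : ℝ → ℝ := fun x => Real.cos (2 * π * x) - c with hf
  set v : ℝ → ℝ := fun x => (max (f x) 0) ^ 2 with hv
  have hfD : ∀ x : ℝ, HasDerivAt f (-Real.sin (2 * π * x) * (2 * π)) x := by
    intro x
    have h1 : HasDerivAt (fun y : ℝ => 2 * π * y) (2 * π) x := by
      simpa using (hasDerivAt_id x).const_mul (2 * π)
    exact ((Real.hasDerivAt_cos (2 * π * x)).comp x h1).sub_const c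
  have hvD : ∀ x : ℝ, HasDerivAt v
      (2 * max (f x) 0 * (-Real.sin (2 * π * x) * (2 * π))) x := by
    intro x
    exact (gmax_hasDerivAt (f x)).comp x (hfD x)
  have hvderiv : ∀ x : ℝ, deriv v x
      = 2 * max (f x) 0 * (-Real.sin (2 * π * x) * (2 * π)) := fun x => (hvD x).deriv
  have hvCD : ContDiff ℝ 1 v := by
    apply gmax_contDiff.comp
    exact (Real.contDiff_cos.comp (contDiff_const.mul contDiff_id)).sub contDiff_const
  have hvc : Continuous v := hvCD.continuous
  have hfc : Continuous f := by
    simp only [hf]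
    exact (Real.continuous_cos.comp (continuous_const.mul continuous_id)).sub continuous_const
  have hdc : Continuous (deriv v) := by
    rw [funext hvderiv]
    exact (continuous_const.mul (hfc.max continuous_const)).mul
      (((Real.continuous_sin.comp (continuous_const.mul continuous_id)).neg).mul continuous_const)
  have hvper : ∀ x : ℝ, v (x + 1) = v x := by
    intro x
    have : f (x + 1) = f x := by
      simp only [hf]
      have h1 : 2 * π * (x + 1) = 2 * π * x + 2 * π := by ring
      rw [h1, Real.cos_add_two_pi]
    simp only [hv, this]
  -- trig estimates
  have hπδ : 0 ≤ π * δ := by positivity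
  have h1cnn : 0 ≤ 1 - c := by simp only [hc]; linarith [Real.cos_le_one (2 * π * δ)]
  have h1c : 1 - c ≤ 2 * π ^ 2 * δ ^ 2 := by
    have := one_sub_cos_le (π * δ)
    have h2 : 2 * (π * δ) = 2 * π * δ := by ring
    rw [h2] at this
    nlinarith
  have hfub : ∀ x : ℝ, max (f x) 0 ≤ 2 * π ^ 2 * δ ^ 2 := by
    intro x
    apply max_le _ (by positivity)
    simp only [hf]
    linarith [Real.cos_le_one (2 * π * x)]
  have hlow : ∀ x ∈ Set.Icc (0:ℝ) (δ/2), 3 * δ ^ 2 ≤ f x := by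
    intro x hx
    have hcc : Real.cos (π * δ) ≤ Real.cos (2 * π * x) := by
      refine Real.cos_le_cos_of_nonneg_of_le_pi ?_ ?_ ?_
      · exact mul_nonneg (by positivity) hx.1
      · nlinarith [Real.pi_pos]
      · nlinarith [Real.pi_pos, hx.2]
    have h8 : 8 * δ ^ 2 ≤ 1 - c := by
      have := one_sub_cos_ge (t := π * δ) (by positivity)
        (by nlinarith [Real.pi_pos])
      have h2 : 2 * (π * δ) = 2 * π * δ := by ring
      rw [h2] at this
      have h3 : 2 / π * (π * δ) = 2 * δ := by field_simp
      rw [h3] at this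
      simp only [hc]
      nlinarith
    have h5 : 1 - Real.cos (π * δ) ≤ π ^ 2 * δ ^ 2 / 2 := by
      have := one_sub_cos_le (π * δ / 2)
      have h2 : 2 * (π * δ / 2) = π * δ := by ring
      rw [h2] at this
      nlinarith
    have hπ2 : π ^ 2 ≤ 10 := by nlinarith [Real.pi_lt_d2, Real.pi_pos]
    simp only [hf]
    nlinarith [sq_nonneg δ]
  have hmono : ∀ y : ℝ, δ ≤ y → y ≤ 1/2 → Real.cos (2 * π * y) ≤ c := by
    intro y h1 h2
    refine Real.cos_le_cos_of_nonneg_of_le_pi ?_ ?_ ?_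
    · positivity
    · nlinarith [Real.pi_pos]
    · nlinarith [Real.pi_pos]
  have hmid : ∀ x ∈ Set.Icc δ (1 - δ), max (f x) 0 = 0 := by
    intro x hx
    apply max_eq_right
    simp only [hf, sub_nonpos]
    rcases le_or_gt x (1/2) with h | h
    · exact hmono x hx.1 h
    · have h2 : 2 * π * (1 - x) = 2 * π - 2 * π * x := by ring
      have h3 := hmono (1 - x) (by linarith [hx.2]) (by linarith)
      rw [h2, Real.cos_two_pi_sub] at h3
      exact h3
  -- pointwise bounds
  have habs : ∀ y : ℝ, Real.sin y ^ 2 ≤ y ^ 2 := fun y => Real.sin_sq_le_sq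
  have hsin1 : ∀ x ∈ Set.Icc (0:ℝ) δ, Real.sin (2 * π * x) ^ 2 ≤ 4 * π ^ 2 * δ ^ 2 := by
    intro x hx
    calc Real.sin (2 * π * x) ^ 2 ≤ (2 * π * x) ^ 2 := habs _
      _ ≤ (2 * π * δ) ^ 2 := by
          refine pow_le_pow_left₀ (mul_nonneg (by positivity) hx.1) ?_ 2
          nlinarith [Real.pi_pos, hx.1, hx.2]
      _ = 4 * π ^ 2 * δ ^ 2 := by ring
  have hsin2 : ∀ x ∈ Set.Icc (1 - δ) (1:ℝ), Real.sin (2 * π * x) ^ 2 ≤ 4 * π ^ 2 * δ ^ 2 := by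
    intro x hx
    have h0 : Real.sin (2 * π * x) = Real.sin (2 * π * (x - 1)) := by
      have h1 : 2 * π * (x - 1) = 2 * π * x - 2 * π := by ring
      rw [h1, Real.sin_sub_two_pi]
    rw [h0]
    calc Real.sin (2 * π * (x - 1)) ^ 2 ≤ (2 * π * (x - 1)) ^ 2 := habs _
      _ ≤ (2 * π * δ) ^ 2 := by
          refine sq_le_sq' ?_ ?_
          · nlinarith [Real.pi_pos, hx.1, hx.2]
          · nlinarith [Real.pi_pos, hx.1, hx.2]
      _ = 4 * π ^ 2 * δ ^ 2 := by ring
  have hderiv_b : ∀ x : ℝ, Real.sin (2 * π * x) ^ 2 ≤ 4 * π ^ 2 * δ ^ 2 →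
      deriv v x ^ 2 ≤ 256 * π ^ 8 * δ ^ 6 := by
    intro x hs
    rw [hvderiv x]
    have hm0 : (0:ℝ) ≤ max (f x) 0 := le_max_right _ _
    have hm := hfub x
    calc (2 * max (f x) 0 * (-Real.sin (2 * π * x) * (2 * π))) ^ 2
        = 16 * π ^ 2 * ((max (f x) 0) ^ 2 * Real.sin (2 * π * x) ^ 2) := by ring
      _ ≤ 16 * π ^ 2 * ((2 * π ^ 2 * δ ^ 2) ^ 2 * (4 * π ^ 2 * δ ^ 2)) := by
          refine mul_le_mul_of_nonneg_left ?_ (by positivity)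
          exact mul_le_mul (pow_le_pow_left₀ hm0 hm 2) hs (sq_nonneg _) (by positivity)
      _ = 256 * π ^ 8 * δ ^ 6 := by ring
  have hvub : ∀ x : ℝ, v x ^ 2 ≤ 16 * π ^ 8 * δ ^ 8 := by
    intro x
    have hm0 : (0:ℝ) ≤ max (f x) 0 := le_max_right _ _
    have h4 : v x ^ 2 = (max (f x) 0) ^ 4 := by simp only [hv]; ring
    rw [h4]
    calc (max (f x) 0) ^ 4 ≤ (2 * π ^ 2 * δ ^ 2) ^ 4 := pow_le_pow_left₀ hm0 (hfub x) 4
      _ = 16 * π ^ 8 * δ ^ 8 := by ring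
  have hVb1 : ∀ x ∈ Set.Icc (0:ℝ) δ, V x * v x ^ 2 ≤ K * δ ^ 2 * (16 * π ^ 8 * δ ^ 8) := by
    intro x hx
    have hVx : V x ≤ K * δ ^ 2 := by
      have h1 : |x| ≤ ρ := by rw [abs_of_nonneg hx.1]; linarith [hx.2]
      have h2 := hVK x h1
      have h3 : x ^ 2 ≤ δ ^ 2 := pow_le_pow_left₀ hx.1 hx.2 2
      nlinarith [h3]
    exact mul_le_mul hVx (hvub x) (sq_nonneg _) (by positivity)
  have hVb2 : ∀ x ∈ Set.Icc (1 - δ) (1:ℝ), V x * v x ^ 2 ≤ K * δ ^ 2 * (16 * π ^ 8 * δ ^ 8) := by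
    intro x hx
    have hVeq : V x = V (x - 1) := by
      have h := hVper (x - 1)
      rw [show x - 1 + 1 = x by ring] at h
      exact h
    have hVx : V x ≤ K * δ ^ 2 := by
      rw [hVeq]
      have h1 : |x - 1| ≤ ρ := by
        rw [abs_of_nonpos (by linarith [hx.2])]
        linarith [hx.1]
      have h2 := hVK (x - 1) h1
      have h3 : (x - 1) ^ 2 ≤ δ ^ 2 := by
        refine sq_le_sq' (by linarith [hx.1]) (by linarith [hx.2])
      nlinarith [h3]
    exact mul_le_mul hVx (hvub x) (sq_nonneg _) (by positivity)
  -- the numerator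
  set P : ℝ → ℝ := fun x => 2 * ε ^ 2 * deriv v x ^ 2 + V x * v x ^ 2 with hP
  have hPc : Continuous P := (continuous_const.mul (hdc.pow 2)).add (hVc.mul (hvc.pow 2))
  have hδ1 : δ ≤ 1 - δ := by linarith
  have hδ2 : (1:ℝ) - δ ≤ 1 := by linarith
  set M : ℝ := 2 * ε ^ 2 * (256 * π ^ 8 * δ ^ 6) + K * δ ^ 2 * (16 * π ^ 8 * δ ^ 8) with hM
  have hB1 : ∫ x in (0:ℝ)..δ, P x ≤ δ * M := by
    have h := integral_le_const_mul (f := P) (M := M) hδpos.le hPc ?_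
    · simpa using h
    · intro x hx
      simp only [hP, hM]
      exact add_le_add (mul_le_mul_of_nonneg_left (hderiv_b x (hsin1 x hx)) (by positivity))
        (hVb1 x hx)
  have hB3 : ∫ x in (1 - δ)..(1:ℝ), P x ≤ δ * M := by
    have h := integral_le_const_mul (f := P) (M := M) hδ2 hPc ?_
    · rw [show (1:ℝ) - (1 - δ) = δ by ring] at h
      exact h
    · intro x hx
      simp only [hP, hM]
      exact add_le_add (mul_le_mul_of_nonneg_left (hderiv_b x (hsin2 x hx)) (by positivity))
        (hVb2 x hx)
  have hBmid : ∫ x in δ..(1 - δ), P x = 0 := by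
    apply integral_zero_of_eq_zero hδ1
    intro x hx
    have hm := hmid x hx
    simp only [hP, hvderiv x]; simp only [hv, hm]
    ring
  have hNsplit : (∫ x in (0:ℝ)..δ, P x) + (∫ x in δ..(1 - δ), P x)
      + (∫ x in (1 - δ)..(1:ℝ), P x) = ∫ x in (0:ℝ)..1, P x := by
    rw [intervalIntegral.integral_add_adjacent_intervals (hPc.intervalIntegrable _ _)
      (hPc.intervalIntegrable _ _)]
    exact intervalIntegral.integral_add_adjacent_intervals (hPc.intervalIntegrable _ _)
      (hPc.intervalIntegrable _ _)
  have hN : ∫ x in (0:ℝ)..1, P x ≤ 2 * δ * M := by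
    rw [← hNsplit, hBmid]
    linarith [hB1, hB3]
  -- the denominator
  have hQc : Continuous (fun x => v x ^ 2) := hvc.pow 2
  have hδq : δ / 2 ≤ (1:ℝ) := by linarith
  have hDsplit : (∫ x in (0:ℝ)..(δ/2), v x ^ 2) + (∫ x in (δ/2)..(1:ℝ), v x ^ 2)
      = ∫ x in (0:ℝ)..1, v x ^ 2 :=
    intervalIntegral.integral_add_adjacent_intervals (hQc.intervalIntegrable _ _)
      (hQc.intervalIntegrable _ _)
  have hDB1 : δ / 2 * (81 * δ ^ 8) ≤ ∫ x in (0:ℝ)..(δ/2), v x ^ 2 := by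
    have h := const_mul_le_integral (f := fun x => v x ^ 2) (M := 81 * δ ^ 8)
      (by positivity : (0:ℝ) ≤ δ/2) hQc ?_
    · simpa using h
    · intro x hx
      have h2 : 3 * δ ^ 2 ≤ max (f x) 0 := le_trans (hlow x hx) (le_max_left _ _)
      have h3 : (3 * δ ^ 2) ^ 4 ≤ (max (f x) 0) ^ 4 := pow_le_pow_left₀ (by positivity) h2 4
      have h4 : v x ^ 2 = (max (f x) 0) ^ 4 := by simp only [hv]; ring
      show (81:ℝ) * δ ^ 8 ≤ v x ^ 2
      rw [h4]
      calc (81:ℝ) * δ ^ 8 = (3 * δ ^ 2) ^ 4 := by ring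
        _ ≤ _ := h3
  have hDB2 : 0 ≤ ∫ x in (δ/2)..(1:ℝ), v x ^ 2 :=
    intervalIntegral.integral_nonneg hδq (fun x _ => sq_nonneg _)
  have hD : δ / 2 * (81 * δ ^ 8) ≤ ∫ x in (0:ℝ)..1, v x ^ 2 := by
    rw [← hDsplit]; linarith
  have hDpos : 0 < ∫ x in (0:ℝ)..1, v x ^ 2 := lt_of_lt_of_le (by positivity) hD
  -- conclusion
  have hbdd : BddBelow { e : ℝ | ∃ w : ℝ → ℝ,
      ContDiff ℝ 1 w ∧ (∀ x, w (x + 1) = w x) ∧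
      (∫ x in (0:ℝ)..1, (w x) ^ 2) ≠ 0 ∧
      e = (∫ x in (0:ℝ)..1, (2 * ε ^ 2 * (deriv w x) ^ 2 + V x * (w x) ^ 2)) /
            (∫ x in (0:ℝ)..1, (w x) ^ 2) } := by
    refine ⟨0, ?_⟩
    rintro e ⟨w, hw1, hw2, hw3, rfl⟩
    refine div_nonneg ?_ ?_
    · refine intervalIntegral.integral_nonneg (by norm_num) (fun x _ => ?_)
      exact add_nonneg (by positivity) (mul_nonneg (hVpos x) (sq_nonneg _))
    · exact intervalIntegral.integral_nonneg (by norm_num) (fun x _ => sq_nonneg _)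
  have hmem : (∫ x in (0:ℝ)..1, (2 * ε ^ 2 * (deriv v x) ^ 2 + V x * (v x) ^ 2)) /
      (∫ x in (0:ℝ)..1, (v x) ^ 2) ∈ { e : ℝ | ∃ w : ℝ → ℝ,
      ContDiff ℝ 1 w ∧ (∀ x, w (x + 1) = w x) ∧
      (∫ x in (0:ℝ)..1, (w x) ^ 2) ≠ 0 ∧
      e = (∫ x in (0:ℝ)..1, (2 * ε ^ 2 * (deriv w x) ^ 2 + V x * (w x) ^ 2)) /
            (∫ x in (0:ℝ)..1, (w x) ^ 2) } := ⟨v, hvCD, hvper, hDpos.ne', rfl⟩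
  refine le_trans (csInf_le hbdd hmem) ?_
  rw [div_le_iff₀ hDpos]
  have hπ8 : (0:ℝ) < π ^ 8 := pow_pos Real.pi_pos 8
  have hNe : (∫ x in (0:ℝ)..1, (2 * ε ^ 2 * (deriv v x) ^ 2 + V x * (v x) ^ 2))
      = ∫ x in (0:ℝ)..1, P x := rfl
  rw [hNe]
  have hkey : 2 * δ * M ≤ π ^ 8 * (26 + K) * ε * (δ / 2 * (81 * δ ^ 8)) := by
    simp only [hM]
    rw [hεδ]
    nlinarith [mul_pos hπ8 (pow_pos hδpos 11), mul_pos hK (mul_pos hπ8 (pow_pos hδpos 11))]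
  calc ∫ x in (0:ℝ)..1, P x ≤ 2 * δ * M := hN
    _ ≤ π ^ 8 * (26 + K) * ε * (δ / 2 * (81 * δ ^ 8)) := hkey
    _ ≤ π ^ 8 * (26 + K) * ε * ∫ x in (0:ℝ)..1, v x ^ 2 := by
        refine mul_le_mul_of_nonneg_left hD ?_
        refine mul_nonneg (mul_nonneg hπ8.le (by linarith)) hε.le
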